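/- Let ν be a Lévy measure on ℝ and suppose there exist θ ∈ (0, 2) and C₀ > 0 with ν({x : |x| ≥ t}) ≤ C₀ t^{−θ} for all t ≥ 1, and let β' ∈ (0, 2] satisfy ∫_{|x|≤1} |x|^{β'} ν(dx) < ∞. Then there exists C > 0 such that for all u ∈ ℝ: ∫_ℝ min(|u x|², 1) ν(dx) ≤ C ( |u|^θ · 1_{|u|≤1} + |u|^{β'} · 1_{|u|>1} ). -/

import Mathlib

open MeasureTheory Set
open scoped ENNReal

lemma min_sq_le_rpow {a p : ℝ} (ha : 0 ≤ a) (hp : 0 < p) (hp2 : p ≤ 2) :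
    min (a ^ 2) 1 ≤ a ^ p := by
  rcases eq_or_lt_of_le ha with h0 | h0
  · simp [← h0, Real.zero_rpow hp.ne']
  rcases le_or_gt a 1 with h1 | h1
  · calc min (a ^ 2) 1 ≤ a ^ 2 := min_le_left _ _
      _ = a ^ (2:ℝ) := by rw [← Real.rpow_natCast a 2]; norm_num
      _ ≤ a ^ p := Real.rpow_le_rpow_of_exponent_ge h0 h1 hp2
  · calc min (a ^ 2) 1 ≤ 1 := min_le_right _ _
      _ ≤ a ^ p := Real.one_le_rpow h1.le hp.le


lemma tail_est (ν : Measure ℝ) (θ C₀ : ℝ) (hθ : 0 < θ) (hθ2 : θ < 2) (hC₀ : 0 < C₀)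
    (htail : ∀ t : ℝ, 1 ≤ t → ν {x : ℝ | t ≤ |x|} ≤ ENNReal.ofReal (C₀ * t ^ (-θ)))
    (u : ℝ) (hu0 : u ≠ 0) (hu1 : |u| ≤ 1) :
    ∫⁻ x in {x : ℝ | |x| ≤ 1}ᶜ, ENNReal.ofReal (min (|u * x| ^ 2) 1) ∂ν ≤
      ENNReal.ofReal ((C₀ * (2 / (2 - θ))) * |u| ^ θ) := by
  have hu : 0 < |u| := abs_pos.mpr hu0
  set μ := ν.restrict {x : ℝ | |x| ≤ 1}ᶜ with hμ
  have hmble : Measurable fun x : ℝ => min (|u * x| ^ 2) 1 := by fun_prop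
  have hlc := lintegral_eq_lintegral_meas_lt μ
      (Filter.Eventually.of_forall (fun x => by positivity :
        ∀ x : ℝ, (0:ℝ) ≤ min (|u * x| ^ 2) 1)) hmble.aemeasurable
  rw [hlc]
  have hsplit : ∫⁻ t in Ioi (0:ℝ), μ {x : ℝ | t < min (|u * x| ^ 2) 1} =
      ∫⁻ t in Ioc (0:ℝ) 1, μ {x : ℝ | t < min (|u * x| ^ 2) 1} := by
    rw [← Ioc_union_Ioi_eq_Ioi (zero_le_one (α := ℝ)),
      lintegral_union measurableSet_Ioi (Ioc_disjoint_Ioi le_rfl)]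
    have hz : ∫⁻ t in Ioi (1:ℝ), μ {x : ℝ | t < min (|u * x| ^ 2) 1} = 0 := by
      rw [setLIntegral_congr_fun measurableSet_Ioi
        (fun t ht => ?_), lintegral_zero]
      have he : {x : ℝ | t < min (|u * x| ^ 2) 1} = ∅ := by
        ext x; simp only [mem_setOf_eq, mem_empty_iff_false, iff_false, not_lt]
        exact (min_le_right _ _).trans (le_of_lt ht)
      rw [he]; exact measure_empty
    rw [hz, add_zero]
  rw [hsplit]
  have key : ∀ t ∈ Ioc (0:ℝ) 1, μ {x : ℝ | t < min (|u * x| ^ 2) 1} ≤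
      ENNReal.ofReal (C₀ * |u| ^ θ * t ^ (-θ/2)) := by
    intro t ht
    obtain ⟨ht0, ht1⟩ := ht
    set s := Real.sqrt t / |u| with hs
    have hs0 : 0 < s := div_pos (Real.sqrt_pos.mpr ht0) hu
    have hspow : C₀ * s ^ (-θ) = C₀ * |u| ^ θ * t ^ (-θ/2) := by
      rw [hs, Real.div_rpow (Real.sqrt_nonneg t) (abs_nonneg u), Real.sqrt_eq_rpow,
        ← Real.rpow_mul ht0.le, Real.rpow_neg (abs_nonneg u), div_eq_mul_inv, inv_inv]
      rw [show (1:ℝ)/2 * -θ = -θ/2 by ring]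
      ring
    rcases le_or_gt 1 s with hs1 | hs1
    · have hsub : {x : ℝ | t < min (|u * x| ^ 2) 1} ⊆ {x : ℝ | s ≤ |x|} := by
        intro x hx
        simp only [mem_setOf_eq] at hx ⊢
        have h1 : t < |u * x| ^ 2 := lt_of_lt_of_le hx (min_le_left _ _)
        have h2 : Real.sqrt t < |u * x| := by
          have h3 := Real.sqrt_lt_sqrt ht0.le h1
          rwa [Real.sqrt_sq (abs_nonneg _)] at h3
        rw [abs_mul] at h2
        rw [hs, div_le_iff₀ hu]
        have := mul_comm |u| |x|
        linarith
      calc μ _ ≤ ν {x : ℝ | s ≤ |x|} := le_trans (Measure.restrict_le_self _ ) (ν.mono hsub)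
        _ ≤ ENNReal.ofReal (C₀ * s ^ (-θ)) := htail s hs1
        _ = _ := by rw [hspow]
    · have h1 : μ {x : ℝ | t < min (|u * x| ^ 2) 1} ≤ ν {x : ℝ | (1:ℝ) ≤ |x|} := by
        calc μ _ ≤ μ univ := measure_mono (subset_univ _)
          _ = ν ({x : ℝ | |x| ≤ 1}ᶜ) := by rw [hμ, Measure.restrict_apply_univ]
          _ ≤ ν {x : ℝ | (1:ℝ) ≤ |x|} := ν.mono (fun x hx => le_of_lt (by
              simpa [mem_compl_iff, mem_setOf_eq, not_le] using hx))
      refine h1.trans ((htail 1 le_rfl).trans (ENNReal.ofReal_le_ofReal ?_))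
      rw [← hspow]
      have hone : (1:ℝ) ≤ s ^ (-θ) :=
        Real.one_le_rpow_of_pos_of_le_one_of_nonpos hs0 hs1.le (by linarith)
      calc C₀ * (1:ℝ) ^ (-θ) = C₀ := by rw [Real.one_rpow, mul_one]
        _ ≤ C₀ * s ^ (-θ) := le_mul_of_one_le_right hC₀.le hone
  have hint : IntegrableOn (fun t : ℝ => C₀ * |u| ^ θ * t ^ (-θ/2)) (Ioc (0:ℝ) 1) volume := by
    have h := intervalIntegral.intervalIntegrable_rpow' (a := 0) (b := 1) (r := -θ/2)
      (by linarith)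
    exact (((intervalIntegrable_iff_integrableOn_Ioc_of_le zero_le_one).1 h).const_mul _)
  calc ∫⁻ t in Ioc (0:ℝ) 1, μ {x : ℝ | t < min (|u * x| ^ 2) 1}
      ≤ ∫⁻ t in Ioc (0:ℝ) 1, ENNReal.ofReal (C₀ * |u| ^ θ * t ^ (-θ/2)) :=
        setLIntegral_mono (by fun_prop) key
    _ = ENNReal.ofReal (∫ t in Ioc (0:ℝ) 1, C₀ * |u| ^ θ * t ^ (-θ/2)) := by
        rw [← ofReal_integral_eq_lintegral_ofReal hint
          ((ae_restrict_iff' measurableSet_Ioc).2 (Filter.Eventually.of_forall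
            (fun t ht => mul_nonneg (by positivity) (Real.rpow_nonneg ht.1.le _))))]
    _ ≤ ENNReal.ofReal ((C₀ * (2 / (2 - θ))) * |u| ^ θ) := by
        apply ENNReal.ofReal_le_ofReal
        rw [MeasureTheory.integral_const_mul, ← intervalIntegral.integral_of_le zero_le_one,
          integral_rpow (Or.inl (by linarith))]
        rw [Real.one_rpow, Real.zero_rpow (by linarith : -θ/2 + 1 ≠ 0)]
        have h2θ : (2:ℝ) - θ ≠ 0 := by linarith
        have h2θ' : -θ/2 + 1 ≠ 0 := by
          intro h; apply h2θ; linarith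
        have heq : ((1:ℝ) - 0)/(-θ/2+1) = 2/(2-θ) := by
          rw [div_eq_div_iff h2θ' h2θ]; ring
        rw [heq]; ring_nf; exact le_refl _



/-- Equation (3.5): an estimate for `∫ min(|ux|², 1) ν(dx)` for a Lévy measure `ν`
with a power tail bound and a `β'`-moment near the origin. -/
theorem stmt_1
    (ν : Measure ℝ)
    (hν0 : ν {0} = 0)
    (hν2 : ∫⁻ x : ℝ, ENNReal.ofReal (min 1 (x ^ 2)) ∂ν < ⊤)
    (θ : ℝ) (hθ : 0 < θ) (hθ2 : θ < 2)
    (C₀ : ℝ) (hC₀ : 0 < C₀)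
    (htail : ∀ t : ℝ, 1 ≤ t → ν {x : ℝ | t ≤ |x|} ≤ ENNReal.ofReal (C₀ * t ^ (-θ)))
    (β' : ℝ) (hβ'0 : 0 < β') (hβ'2 : β' ≤ 2)
    (hβ'mom : ∫⁻ x in {x : ℝ | |x| ≤ 1}, ENNReal.ofReal (|x| ^ β') ∂ν < ⊤) :
    ∃ C > (0 : ℝ), ∀ u : ℝ,
      ∫⁻ x : ℝ, ENNReal.ofReal (min (|u * x| ^ 2) 1) ∂ν ≤
        ENNReal.ofReal (C * ((if |u| ≤ 1 then |u| ^ θ else 0) +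
          (if 1 < |u| then |u| ^ β' else 0))) := by

  have hA : MeasurableSet {x : ℝ | |x| ≤ 1} :=
    (isClosed_le continuous_abs continuous_const).measurableSet
  -- second moment near origin
  set I2 : ℝ≥0∞ := ∫⁻ x in {x : ℝ | |x| ≤ 1}, ENNReal.ofReal (x ^ 2) ∂ν with hI2def
  have hI2fin : I2 < ⊤ := by
    have : I2 = ∫⁻ x in {x : ℝ | |x| ≤ 1}, ENNReal.ofReal (min 1 (x ^ 2)) ∂ν := by
      refine setLIntegral_congr_fun hA (fun x hx => ?_)
      have hx2 : x ^ 2 ≤ 1 := by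
        have hx' : |x| ≤ 1 := hx
        have := abs_le.mp hx'
        nlinarith
      rw [min_eq_right hx2]
    rw [this]
    exact lt_of_le_of_lt (setLIntegral_le_lintegral _ _) hν2
  set I1 : ℝ≥0∞ := ∫⁻ x in {x : ℝ | |x| ≤ 1}, ENNReal.ofReal (|x| ^ β') ∂ν with hI1def
  set M₂ : ℝ := I2.toReal with hM2
  set M₁ : ℝ := I1.toReal with hM1
  have hM2nn : 0 ≤ M₂ := ENNReal.toReal_nonneg
  have hM1nn : 0 ≤ M₁ := ENNReal.toReal_nonneg
  have hI2eq : I2 = ENNReal.ofReal M₂ := (ENNReal.ofReal_toReal hI2fin.ne).symm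
  have hI1eq : I1 = ENNReal.ofReal M₁ := (ENNReal.ofReal_toReal hβ'mom.ne).symm
  set K : ℝ := C₀ * (2 / (2 - θ)) with hK
  have hKpos : 0 < K := by
    exact mul_pos hC₀ (div_pos two_pos (by linarith))
  refine ⟨M₂ + K + M₁ + C₀ + 1, by positivity, fun u => ?_⟩
  set C : ℝ := M₂ + K + M₁ + C₀ + 1 with hC
  rcases eq_or_ne u 0 with rfl | hu0
  · have : ∀ x : ℝ, ENNReal.ofReal (min (|(0:ℝ) * x| ^ 2) 1) = 0 := by
      intro x; simp
    simp only [this, lintegral_zero]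
    exact zero_le
  have hu : 0 < |u| := abs_pos.mpr hu0
  have hsplitν : ∫⁻ x : ℝ, ENNReal.ofReal (min (|u * x| ^ 2) 1) ∂ν =
      (∫⁻ x in {x : ℝ | |x| ≤ 1}, ENNReal.ofReal (min (|u * x| ^ 2) 1) ∂ν) +
      ∫⁻ x in {x : ℝ | |x| ≤ 1}ᶜ, ENNReal.ofReal (min (|u * x| ^ 2) 1) ∂ν :=
    (lintegral_add_compl _ hA).symm
  rcases le_or_gt |u| 1 with hu1 | hu1
  · -- case |u| ≤ 1
    have hRHS : (if |u| ≤ 1 then |u| ^ θ else 0) + (if 1 < |u| then |u| ^ β' else 0)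
        = |u| ^ θ := by
      rw [if_pos hu1, if_neg (not_lt.mpr hu1), add_zero]
    rw [hRHS, hsplitν]
    have hin : ∫⁻ x in {x : ℝ | |x| ≤ 1}, ENNReal.ofReal (min (|u * x| ^ 2) 1) ∂ν ≤
        ENNReal.ofReal (M₂ * |u| ^ θ) := by
      have hpt : ∀ x : ℝ, x ∈ {x : ℝ | |x| ≤ 1} →
          ENNReal.ofReal (min (|u * x| ^ 2) 1) ≤
            ENNReal.ofReal (|u| ^ θ) * ENNReal.ofReal (x ^ 2) := by
        intro x hx
        rw [← ENNReal.ofReal_mul (by positivity)]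
        apply ENNReal.ofReal_le_ofReal
        have h1 : min (|u * x| ^ 2) 1 ≤ |u * x| ^ 2 := min_le_left _ _
        have h2 : |u * x| ^ 2 = |u| ^ 2 * x ^ 2 := by
          simp [abs_mul, mul_pow, sq_abs]
        have h3 : |u| ^ 2 ≤ |u| ^ θ := by
          calc |u| ^ 2 = |u| ^ (2:ℝ) := by
                rw [← Real.rpow_natCast |u| 2]; norm_num
            _ ≤ |u| ^ θ := Real.rpow_le_rpow_of_exponent_ge hu hu1 hθ2.le
        calc min (|u * x| ^ 2) 1 ≤ |u| ^ 2 * x ^ 2 := h2 ▸ h1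
          _ ≤ |u| ^ θ * x ^ 2 := by nlinarith [sq_nonneg x]
      calc ∫⁻ x in {x : ℝ | |x| ≤ 1}, ENNReal.ofReal (min (|u * x| ^ 2) 1) ∂ν
          ≤ ∫⁻ x in {x : ℝ | |x| ≤ 1},
              ENNReal.ofReal (|u| ^ θ) * ENNReal.ofReal (x ^ 2) ∂ν :=
            setLIntegral_mono (by fun_prop) hpt
        _ = ENNReal.ofReal (|u| ^ θ) * I2 := lintegral_const_mul _ (by fun_prop)
        _ = ENNReal.ofReal (|u| ^ θ) * ENNReal.ofReal M₂ := by rw [hI2eq]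
        _ = ENNReal.ofReal (M₂ * |u| ^ θ) := by
            rw [← ENNReal.ofReal_mul (by positivity), mul_comm]
    have hout := tail_est ν θ C₀ hθ hθ2 hC₀ htail u hu0 hu1
    calc _ ≤ ENNReal.ofReal (M₂ * |u| ^ θ) + ENNReal.ofReal (K * |u| ^ θ) :=
          add_le_add hin hout
      _ = ENNReal.ofReal ((M₂ + K) * |u| ^ θ) := by
          rw [← ENNReal.ofReal_add (by positivity) (by positivity)]; ring_nf
      _ ≤ ENNReal.ofReal (C * |u| ^ θ) := by
          apply ENNReal.ofReal_le_ofReal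
          apply mul_le_mul_of_nonneg_right _ (by positivity)
          rw [hC]; linarith
  · -- case |u| > 1
    have hRHS : (if |u| ≤ 1 then |u| ^ θ else 0) + (if 1 < |u| then |u| ^ β' else 0)
        = |u| ^ β' := by
      rw [if_neg (not_le.mpr hu1), if_pos hu1, zero_add]
    rw [hRHS, hsplitν]
    have huβ : (1:ℝ) ≤ |u| ^ β' := Real.one_le_rpow hu1.le hβ'0.le
    have hin : ∫⁻ x in {x : ℝ | |x| ≤ 1}, ENNReal.ofReal (min (|u * x| ^ 2) 1) ∂ν ≤
        ENNReal.ofReal (M₁ * |u| ^ β') := by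
      have hpt : ∀ x : ℝ, x ∈ {x : ℝ | |x| ≤ 1} →
          ENNReal.ofReal (min (|u * x| ^ 2) 1) ≤
            ENNReal.ofReal (|u| ^ β') * ENNReal.ofReal (|x| ^ β') := by
        intro x hx
        rw [← ENNReal.ofReal_mul (by positivity)]
        apply ENNReal.ofReal_le_ofReal
        calc min (|u * x| ^ 2) 1 ≤ |u * x| ^ β' :=
            min_sq_le_rpow (abs_nonneg _) hβ'0 hβ'2
          _ = |u| ^ β' * |x| ^ β' := by
            rw [abs_mul, Real.mul_rpow (abs_nonneg u) (abs_nonneg x)]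
      calc ∫⁻ x in {x : ℝ | |x| ≤ 1}, ENNReal.ofReal (min (|u * x| ^ 2) 1) ∂ν
          ≤ ∫⁻ x in {x : ℝ | |x| ≤ 1},
              ENNReal.ofReal (|u| ^ β') * ENNReal.ofReal (|x| ^ β') ∂ν :=
            setLIntegral_mono (by fun_prop) hpt
        _ = ENNReal.ofReal (|u| ^ β') * I1 := lintegral_const_mul _ (by fun_prop)
        _ = ENNReal.ofReal (|u| ^ β') * ENNReal.ofReal M₁ := by rw [hI1eq]
        _ = ENNReal.ofReal (M₁ * |u| ^ β') := by
            rw [← ENNReal.ofReal_mul (by positivity), mul_comm]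
    have hout : ∫⁻ x in {x : ℝ | |x| ≤ 1}ᶜ, ENNReal.ofReal (min (|u * x| ^ 2) 1) ∂ν ≤
        ENNReal.ofReal (C₀ * |u| ^ β') := by
      calc ∫⁻ x in {x : ℝ | |x| ≤ 1}ᶜ, ENNReal.ofReal (min (|u * x| ^ 2) 1) ∂ν
          ≤ ∫⁻ _x in {x : ℝ | |x| ≤ 1}ᶜ, 1 ∂ν := by
            apply setLIntegral_mono (by fun_prop)
            intro x _
            rw [← ENNReal.ofReal_one]
            exact ENNReal.ofReal_le_ofReal (min_le_right _ _)
        _ = ν ({x : ℝ | |x| ≤ 1}ᶜ) := by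
            rw [lintegral_one, Measure.restrict_apply_univ]
        _ ≤ ν {x : ℝ | (1:ℝ) ≤ |x|} := ν.mono (fun x hx => le_of_lt (by
            simpa [mem_compl_iff, mem_setOf_eq, not_le] using hx))
        _ ≤ ENNReal.ofReal (C₀ * (1:ℝ) ^ (-θ)) := htail 1 le_rfl
        _ ≤ ENNReal.ofReal (C₀ * |u| ^ β') := by
            apply ENNReal.ofReal_le_ofReal
            rw [Real.one_rpow, mul_one]
            exact le_mul_of_one_le_right hC₀.le huβ
    calc _ ≤ ENNReal.ofReal (M₁ * |u| ^ β') + ENNReal.ofReal (C₀ * |u| ^ β') :=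
          add_le_add hin hout
      _ = ENNReal.ofReal ((M₁ + C₀) * |u| ^ β') := by
          rw [← ENNReal.ofReal_add (by positivity) (by positivity)]; ring_nf
      _ ≤ ENNReal.ofReal (C * |u| ^ β') := by
          apply ENNReal.ofReal_le_ofReal
          apply mul_le_mul_of_nonneg_right _ (by positivity)
          rw [hC]; linarith
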